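/- Let σ = (σ₁,…,σₙ) : V → ℝⁿ be the orbit map of an orthogonal representation of a compact Lie group G, with σᵢ homogeneous of degree dᵢ and σ separating orbits. Let c̄₁, c̄₂ be two curves defined near t₀ with values in V, both lifts of the same curve c (σ∘c̄ᵢ = c), both one-sided differentiable at t₀ with c̄ᵢ(t₀) = 0. Then c̄₁'(t₀) and c̄₂'(t₀) lie in the same G-orbit. -/

import Mathlib

open Filter Topology

/-- If `c̄₁, c̄₂` are two lifts of the same curve `c` (for the orbit map `σ` of an
orthogonal representation of a compact group, with homogeneous components separating
orbits), both one-sided differentiable at `t₀` with `c̄ᵢ(t₀) = 0`, then their one-sided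
derivatives at `t₀` lie in the same `G`-orbit. -/
theorem onesided_derivatives_same_orbit
    (G : Type*) [Group G] [TopologicalSpace G] [IsTopologicalGroup G] [CompactSpace G]
    {V : Type*} [NormedAddCommGroup V] [InnerProductSpace ℝ V] [FiniteDimensional ℝ V]
    (ρ : G →* (V ≃ₗᵢ[ℝ] V))
    (hρcont : Continuous (fun p : G × V => ρ p.1 p.2))
    (n : ℕ) (σ : V → (Fin n → ℝ)) (hσcont : Continuous σ)
    (d : Fin n → ℕ) (hd : ∀ i, 1 ≤ d i)
    (hhom : ∀ (s : ℝ) (v : V) (i : Fin n), σ (s • v) i = s ^ d i * σ v i)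
    (hsep : ∀ v w, σ v = σ w ↔ ∃ g : G, ρ g v = w)
    (t₀ : ℝ) (cbar₁ cbar₂ : ℝ → V)
    (hsame : ∀ t, σ (cbar₁ t) = σ (cbar₂ t))
    (h0₁ : cbar₁ t₀ = 0) (h0₂ : cbar₂ t₀ = 0)
    (v₁ v₂ : V)
    (hd₁ : Tendsto (fun t => (t - t₀)⁻¹ • cbar₁ t) (𝓝[>] t₀) (𝓝 v₁))
    (hd₂ : Tendsto (fun t => (t - t₀)⁻¹ • cbar₂ t) (𝓝[>] t₀) (𝓝 v₂)) :
    ∃ g : G, ρ g v₂ = v₁ := by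
  have key : ∀ t, σ ((t - t₀)⁻¹ • cbar₁ t) = σ ((t - t₀)⁻¹ • cbar₂ t) := by
    intro t
    funext i
    rw [hhom, hhom, hsame]
  have l1 : Tendsto (fun t => σ ((t - t₀)⁻¹ • cbar₁ t)) (𝓝[>] t₀) (𝓝 (σ v₁)) :=
    (hσcont.tendsto v₁).comp hd₁
  have l2 : Tendsto (fun t => σ ((t - t₀)⁻¹ • cbar₁ t)) (𝓝[>] t₀) (𝓝 (σ v₂)) := by
    simp only [key]
    exact (hσcont.tendsto v₂).comp hd₂
  have : σ v₂ = σ v₁ := (tendsto_nhds_unique l2 l1)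
  exact (hsep v₂ v₁).mp this
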